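/- Let λ be a complex number with positive real part a > 0, let τ ≥ 0, μ > 0, and let Φ₁, Φ₂ be positive reals with Φ₁ < Φ₂. Then the characteristic equation λ = (Φ₁ e^{−λτ} − Φ₂) μ has no solution; i.e., all roots of this equation have nonpositive real part. -/

import Mathlib

/-- The delayed characteristic equation `λ = (Φ₁ e^{−λτ} − Φ₂) μ` has no root with
positive real part when `0 < Φ₁ < Φ₂`, `μ > 0`, `τ ≥ 0`. -/
theorem stmt_4 (lam : ℂ) (hre : 0 < lam.re) (τ μ Φ₁ Φ₂ : ℝ)
    (hτ : 0 ≤ τ) (hμ : 0 < μ) (hΦ₁ : 0 < Φ₁) (hΦ₂ : 0 < Φ₂) (hlt : Φ₁ < Φ₂) :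
    lam ≠ ((Φ₁ : ℂ) * Complex.exp (-lam * (τ : ℂ)) - (Φ₂ : ℂ)) * (μ : ℂ) := by
  intro heq
  have h1 : lam + (Φ₂ : ℂ) * (μ : ℂ) = (Φ₁ : ℂ) * Complex.exp (-lam * (τ : ℂ)) * (μ : ℂ) := by
    linear_combination heq
  have habs : ‖lam + (Φ₂ : ℂ) * (μ : ℂ)‖
      = Φ₁ * Real.exp (-lam.re * τ) * μ := by
    rw [h1]
    simp [map_mul, Complex.norm_exp, Complex.norm_of_nonneg hΦ₁.le,
      Complex.norm_of_nonneg hμ.le, abs_of_pos hΦ₁, abs_of_pos hμ]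
  have hle : Φ₁ * Real.exp (-lam.re * τ) * μ ≤ Φ₁ * μ := by
    have : Real.exp (-lam.re * τ) ≤ 1 := by
      apply Real.exp_le_one_iff.mpr
      nlinarith
    nlinarith [mul_pos hΦ₁ hμ, Real.exp_pos (-lam.re * τ)]
  have hlow : Φ₂ * μ < ‖lam + (Φ₂ : ℂ) * (μ : ℂ)‖ := by
    have hre' : (lam + (Φ₂ : ℂ) * (μ : ℂ)).re = lam.re + Φ₂ * μ := by simp
    calc Φ₂ * μ < lam.re + Φ₂ * μ := by linarith
    _ = (lam + (Φ₂ : ℂ) * (μ : ℂ)).re := hre'.symm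
    _ ≤ ‖lam + (Φ₂ : ℂ) * (μ : ℂ)‖ := Complex.re_le_norm _
  nlinarith [habs, hle, hlow]
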